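/- Define h(n) = 2^{-n} · Σ_{j=0}^{n} C(n,j)/(1 + (n−2j)²). For all odd integers n ≥ 1, 1/2 ≤ √n·h(n) ≤ √(π/2)·tanh(π/2), and for all even integers n ≥ 2, 3√2/5 ≤ √n·h(n) ≤ √(π/2)·coth(π/2). -/

import Mathlib

open Real

noncomputable def h (n : ℕ) : ℝ :=
  (∑ j ∈ Finset.range (n + 1), (n.choose j : ℝ) / (1 + ((n : ℝ) - 2 * j) ^ 2)) / 2 ^ n



lemma choose_id (n i : ℕ) :
    ((n+2).choose (i+1)) * ((i+1) * ((n+1) - i)) = (n+2) * (n+1) * n.choose i := by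
  rcases le_or_gt i (n+1) with hi | hi
  · have h1 : (n+2).choose (i+1) * (i+1) = (n+2) * (n+1).choose i :=
      (Nat.add_one_mul_choose_eq (n+1) i).symm
    have h2 : (n+1).choose i * ((n+1) - i) = (n+1) * n.choose i :=
      (Nat.choose_succ_right_eq (n+1) i).symm.trans (Nat.add_one_mul_choose_eq n i).symm
    calc (n+2).choose (i+1) * ((i+1) * ((n+1) - i))
        = ((n+2).choose (i+1) * (i+1)) * ((n+1) - i) := by ring
      _ = (n+2) * ((n+1).choose i * ((n+1)-i)) := by rw [h1]; ring
      _ = (n+2) * ((n+1) * n.choose i) := by rw [h2]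
      _ = (n+2) * (n+1) * n.choose i := by ring
  · have h1 : n.choose i = 0 := Nat.choose_eq_zero_of_lt (by omega)
    have h2 : (n+1) - i = 0 := by omega
    simp [h1, h2]

lemma h_rec (n : ℕ) :
    (((n:ℝ)+2)^2 + 1) * h (n+2) = 1 + ((n:ℝ)+2) * ((n:ℝ)+1) * h n := by
  have key : (((n:ℝ)+2)^2 + 1) *
      (∑ j ∈ Finset.range (n + 2 + 1), ((n+2).choose j : ℝ) / (1 + (((n:ℝ)+2) - 2 * j) ^ 2))
      = 2^(n+2) + 4 * ((n:ℝ)+2) * ((n:ℝ)+1) *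
        (∑ j ∈ Finset.range (n + 1), (n.choose j : ℝ) / (1 + ((n : ℝ) - 2 * j) ^ 2)) := by
    have e1 : ∀ j ∈ Finset.range (n+2+1),
        (((n:ℝ)+2)^2 + 1) * (((n+2).choose j : ℝ) / (1 + (((n:ℝ)+2) - 2 * j) ^ 2))
        = ((n+2).choose j : ℝ) +
          (((n+2).choose j : ℝ) * (4 * j * (((n:ℝ)+2) - j))) / (1 + (((n:ℝ)+2) - 2 * j) ^ 2) := by
      intro j _
      have hD : (0:ℝ) < 1 + (((n:ℝ)+2) - 2 * j) ^ 2 := by positivity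
      field_simp
      ring
    rw [Finset.mul_sum, Finset.sum_congr rfl e1, Finset.sum_add_distrib]
    have e2 : ∑ j ∈ Finset.range (n+2+1), (((n+2).choose j : ℝ)) = 2^(n+2) := by
      rw [← Nat.cast_sum]
      norm_cast
      exact Nat.sum_range_choose (n+2)
    rw [e2]
    congr 1
    rw [Finset.sum_range_succ' (fun j => (((n+2).choose j : ℝ) * (4 * j * (((n:ℝ)+2) - j))) / (1 + (((n:ℝ)+2) - 2 * j) ^ 2)) (n+2)]
    simp only [Nat.cast_zero, mul_zero, zero_mul, mul_zero, zero_div, add_zero]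
    have e3 : ∀ i ∈ Finset.range (n+2),
        (((n+2).choose (i+1) : ℝ) * (4 * ((i:ℝ)+1) * (((n:ℝ)+2) - ((i:ℝ)+1)))) / (1 + (((n:ℝ)+2) - 2 * ((i:ℝ)+1)) ^ 2)
        = 4 * ((n:ℝ)+2) * ((n:ℝ)+1) * ((n.choose i : ℝ) / (1 + ((n:ℝ) - 2 * i) ^ 2)) := by
      intro i hi
      have hi' : i ≤ n + 1 := by
        simp only [Finset.mem_range] at hi; omega
      have hc : ((n+2).choose (i+1) : ℝ) * (((i:ℝ)+1) * (((n:ℝ)+1) - i)) = ((n:ℝ)+2) * ((n:ℝ)+1) * (n.choose i : ℝ) := by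
        have h0 := choose_id n i
        have hcast : (((n+1) - i : ℕ) : ℝ) = ((n:ℝ)+1) - i := by
          rw [Nat.cast_sub (by omega : i ≤ n+1)]
          push_cast; ring
        calc ((n+2).choose (i+1) : ℝ) * (((i:ℝ)+1) * (((n:ℝ)+1) - i))
            = ((n+2).choose (i+1) : ℝ) * (((i:ℝ)+1) * (((n+1) - i : ℕ) : ℝ)) := by rw [hcast]
          _ = ((((n+2).choose (i+1)) * ((i+1) * ((n+1) - i)) : ℕ) : ℝ) := by push_cast; ring
          _ = (((n+2) * (n+1) * n.choose i : ℕ) : ℝ) := by rw [h0]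
          _ = ((n:ℝ)+2) * ((n:ℝ)+1) * (n.choose i : ℝ) := by push_cast; ring
      have hD : (0:ℝ) < 1 + ((n:ℝ) - 2 * i) ^ 2 := by positivity
      have hDeq : (1 + (((n:ℝ)+2) - 2 * ((i:ℝ)+1)) ^ 2) = 1 + ((n:ℝ) - 2 * i) ^ 2 := by ring
      rw [hDeq, ← mul_div_assoc]
      congr 1
      linear_combination 4 * hc
    push_cast
    rw [Finset.sum_congr rfl e3, ← Finset.mul_sum]
    rw [Finset.sum_range_succ]
    simp [Nat.choose_succ_self]
  -- now turn key into the h-statement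
  have hS1 : h n * 2^n = ∑ j ∈ Finset.range (n + 1), (n.choose j : ℝ) / (1 + ((n : ℝ) - 2 * j) ^ 2) :=
    div_mul_cancel₀ _ (by positivity)
  have hS3 : h (n+2) * 2^(n+2) = ∑ j ∈ Finset.range (n + 2 + 1), ((n+2).choose j : ℝ) / (1 + (((n:ℝ)+2) - 2 * j) ^ 2) := by
    unfold h
    push_cast
    exact div_mul_cancel₀ _ (by positivity)
  have h2 : ((2:ℝ)^(n+2)) ≠ 0 := by positivity
  apply mul_right_cancel₀ h2
  linear_combination key + (((n:ℝ)+2)^2+1) * hS3 - 4*((n:ℝ)+2)*((n:ℝ)+1)*hS1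

lemma h_zero : h 0 = 1 := by
  simp [h]

lemma h_one : h 1 = 1/2 := by
  rw [h]
  rw [Finset.sum_range_succ, Finset.sum_range_succ, Finset.sum_range_zero]
  norm_num

lemma h_two : h 2 = 3/5 := by
  rw [h]
  rw [Finset.sum_range_succ, Finset.sum_range_succ, Finset.sum_range_succ, Finset.sum_range_zero]
  norm_num

-- key inequality for the lower bound induction
lemma key_ineq (x : ℝ) (hx : 1 ≤ x) :
    ((x+2)^2 + 1) / Real.sqrt (x+2) - (x+2)*(x+1) / Real.sqrt x ≤ 1 := by
  set a := Real.sqrt (x+2) with ha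
  set b := Real.sqrt x with hb
  have hb1 : 1 ≤ b := by
    rw [hb, show (1:ℝ) = Real.sqrt 1 by simp]
    exact Real.sqrt_le_sqrt hx
  have hb0 : 0 < b := lt_of_lt_of_le one_pos hb1
  have ha0 : 0 < a := Real.sqrt_pos.mpr (by linarith)
  have ha2 : a^2 = x + 2 := Real.sq_sqrt (by linarith)
  have hb2 : b^2 = x := Real.sq_sqrt (by linarith)
  have hab : b ≤ a := Real.sqrt_le_sqrt (by linarith)
  have ha1 : 1 ≤ a := le_trans hb1 hab
  -- b*(a-b) = ab - b^2 ≤ 1 by AM-GM since a^2 = b^2 + 2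
  have amgm : a*b ≤ b^2 + 1 := by nlinarith [sq_nonneg (a - b)]
  rw [div_sub_div _ _ (ne_of_gt ha0) (ne_of_gt hb0), div_le_one (by positivity)]
  nlinarith [mul_pos ha0 hb0, sq_nonneg (a-b), mul_le_mul_of_nonneg_left amgm (pow_pos ha0 3).le]

lemma lower_step (L : ℝ) (hL0 : 0 ≤ L) (hL1 : L ≤ 1) (n : ℕ) (hn : 1 ≤ n)
    (ih : L / Real.sqrt n ≤ h n) : L / Real.sqrt ((n+2 : ℕ) : ℝ) ≤ h (n+2) := by
  have hcast : ((n+2 : ℕ) : ℝ) = (n:ℝ) + 2 := by push_cast; ring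
  rw [hcast]
  have hx : (1:ℝ) ≤ (n:ℝ) := by exact_mod_cast hn
  have hsn : 0 < Real.sqrt n := Real.sqrt_pos.mpr (by linarith)
  have hsn2 : 0 < Real.sqrt ((n:ℝ)+2) := Real.sqrt_pos.mpr (by linarith)
  have hD : (0:ℝ) < ((n:ℝ)+2)^2 + 1 := by positivity
  have hrec := h_rec n
  have hbr := key_ineq (n:ℝ) hx
  have hLbr : L * ((((n:ℝ)+2)^2 + 1) / Real.sqrt ((n:ℝ)+2) - ((n:ℝ)+2)*((n:ℝ)+1) / Real.sqrt (n:ℝ)) ≤ 1 := by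
    rcases le_or_gt ((((n:ℝ)+2)^2 + 1) / Real.sqrt ((n:ℝ)+2) - ((n:ℝ)+2)*((n:ℝ)+1) / Real.sqrt (n:ℝ)) 0 with hbr0 | hbr0
    · exact le_trans (mul_nonpos_of_nonneg_of_nonpos hL0 hbr0) zero_le_one
    · nlinarith
  -- ((n+2)^2+1) * h (n+2) = 1 + (n+2)(n+1) h n ≥ 1 + (n+2)(n+1) L/√n ≥ ((n+2)^2+1) L/√(n+2)
  have step1 : 1 + ((n:ℝ)+2)*((n:ℝ)+1) * (L / Real.sqrt n) ≤ (((n:ℝ)+2)^2 + 1) * h (n+2) := by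
    rw [hrec]
    have : ((n:ℝ)+2)*((n:ℝ)+1) > 0 := by positivity
    nlinarith
  have step2 : (((n:ℝ)+2)^2 + 1) * (L / Real.sqrt ((n:ℝ)+2)) ≤ 1 + ((n:ℝ)+2)*((n:ℝ)+1) * (L / Real.sqrt n) := by
    have e1 : (((n:ℝ)+2)^2 + 1) * (L / Real.sqrt ((n:ℝ)+2)) = L * ((((n:ℝ)+2)^2 + 1) / Real.sqrt ((n:ℝ)+2)) := by ring
    have e2 : ((n:ℝ)+2)*((n:ℝ)+1) * (L / Real.sqrt (n:ℝ)) = L * (((n:ℝ)+2)*((n:ℝ)+1) / Real.sqrt (n:ℝ)) := by ring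
    rw [e1, e2]
    rw [mul_sub] at hLbr
    linarith
  have hfin := le_trans step2 step1
  exact le_of_mul_le_mul_left hfin hD

lemma lower_all (L : ℝ) (hL0 : 0 ≤ L) (hL1 : L ≤ 1) (n0 : ℕ) (hn0 : 1 ≤ n0)
    (hbase : L / Real.sqrt (n0 : ℝ) ≤ h n0) :
    ∀ k : ℕ, L / Real.sqrt ((n0 + 2*k : ℕ) : ℝ) ≤ h (n0 + 2*k) := by
  intro k
  induction k with
  | zero => simpa using hbase
  | succ m ih =>
      have e : n0 + 2*(m+1) = (n0 + 2*m) + 2 := by ring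
      rw [e]
      exact lower_step L hL0 hL1 (n0 + 2*m) (by omega) ih

noncomputable def Go (n : ℕ) : ℝ := ∫ t in (0:ℝ)..(π/2), Real.sinh (π/2 - t) * Real.cos t ^ n
noncomputable def Ge (n : ℕ) : ℝ := ∫ t in (0:ℝ)..(π/2), Real.cosh (π/2 - t) * Real.cos t ^ n
noncomputable def Wn (n : ℕ) : ℝ := ∫ t in (0:ℝ)..(π/2), Real.cos t ^ n

lemma integrable_aux (F : ℝ → ℝ) (hF : Continuous F) (n : ℕ) (a b : ℝ) :
    IntervalIntegrable (fun t => F (π/2 - t) * Real.cos t ^ n) MeasureTheory.volume a b := by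
  apply Continuous.intervalIntegrable
  fun_prop

lemma hasDerivAt_ker (c : ℝ) (n : ℕ) (x : ℝ) :
    HasDerivAt (fun t => -Real.cosh (c - t) * Real.cos t ^ (n+2)
      + ((n:ℝ)+2) * (Real.sinh (c - t) * Real.cos t ^ (n+1) * Real.sin t))
      ((((n:ℝ)+2)^2+1) * (Real.sinh (c - x) * Real.cos x ^ (n+2))
        - (((n:ℝ)+2)*((n:ℝ)+1)) * (Real.sinh (c - x) * Real.cos x ^ n)) x := by
  have hct : HasDerivAt (fun t : ℝ => c - t) (-1) x := by
    simpa using (hasDerivAt_id x).const_sub c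
  have hcosh : HasDerivAt (fun t => Real.cosh (c - t)) (-Real.sinh (c - x)) x := by
    simpa [Function.comp_def] using (Real.hasDerivAt_cosh (c - x)).comp x hct
  have hsinh : HasDerivAt (fun t => Real.sinh (c - t)) (-Real.cosh (c - x)) x := by
    simpa [Function.comp_def] using (Real.hasDerivAt_sinh (c - x)).comp x hct
  have hcp2 : HasDerivAt (fun t => Real.cos t ^ (n+2))
      (-((n:ℝ)+2) * Real.sin x * Real.cos x ^ (n+1)) x := by
    have := (Real.hasDerivAt_cos x).pow (n+2)
    refine this.congr_deriv ?_
    push_cast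
    ring_nf
  have hcp1 : HasDerivAt (fun t => Real.cos t ^ (n+1))
      (-((n:ℝ)+1) * Real.sin x * Real.cos x ^ n) x := by
    have := (Real.hasDerivAt_cos x).pow (n+1)
    refine this.congr_deriv ?_
    push_cast
    ring_nf
  have t1 : HasDerivAt (fun t => -Real.cosh (c - t) * Real.cos t ^ (n+2))
      (Real.sinh (c - x) * Real.cos x ^ (n+2)
        + (-Real.cosh (c - x)) * (-((n:ℝ)+2) * Real.sin x * Real.cos x ^ (n+1))) x := by
    simpa [Pi.mul_def, Pi.neg_def] using (hcosh.neg.mul hcp2)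
  have t2 : HasDerivAt (fun t => Real.sinh (c - t) * Real.cos t ^ (n+1) * Real.sin t)
      ((-Real.cosh (c - x) * Real.cos x ^ (n+1)
          + Real.sinh (c - x) * (-((n:ℝ)+1) * Real.sin x * Real.cos x ^ n)) * Real.sin x
        + Real.sinh (c - x) * Real.cos x ^ (n+1) * Real.cos x) x :=
    (hsinh.mul hcp1).mul (Real.hasDerivAt_sin x)
  have := t1.add (t2.const_mul ((n:ℝ)+2))
  refine this.congr_deriv (Eq.symm ?_)
  linear_combination (((n:ℝ)+2)*((n:ℝ)+1) * Real.sinh (c-x) * Real.cos x ^ n) * (Real.sin_sq_add_cos_sq x)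

lemma hasDerivAt_ker' (c : ℝ) (n : ℕ) (x : ℝ) :
    HasDerivAt (fun t => -Real.sinh (c - t) * Real.cos t ^ (n+2)
      + ((n:ℝ)+2) * (Real.cosh (c - t) * Real.cos t ^ (n+1) * Real.sin t))
      ((((n:ℝ)+2)^2+1) * (Real.cosh (c - x) * Real.cos x ^ (n+2))
        - (((n:ℝ)+2)*((n:ℝ)+1)) * (Real.cosh (c - x) * Real.cos x ^ n)) x := by
  have hct : HasDerivAt (fun t : ℝ => c - t) (-1) x := by
    simpa using (hasDerivAt_id x).const_sub c
  have hcosh : HasDerivAt (fun t => Real.cosh (c - t)) (-Real.sinh (c - x)) x := by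
    simpa [Function.comp_def] using (Real.hasDerivAt_cosh (c - x)).comp x hct
  have hsinh : HasDerivAt (fun t => Real.sinh (c - t)) (-Real.cosh (c - x)) x := by
    simpa [Function.comp_def] using (Real.hasDerivAt_sinh (c - x)).comp x hct
  have hcp2 : HasDerivAt (fun t => Real.cos t ^ (n+2))
      (-((n:ℝ)+2) * Real.sin x * Real.cos x ^ (n+1)) x := by
    have := (Real.hasDerivAt_cos x).pow (n+2)
    refine this.congr_deriv ?_
    push_cast
    ring_nf
  have hcp1 : HasDerivAt (fun t => Real.cos t ^ (n+1))
      (-((n:ℝ)+1) * Real.sin x * Real.cos x ^ n) x := by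
    have := (Real.hasDerivAt_cos x).pow (n+1)
    refine this.congr_deriv ?_
    push_cast
    ring_nf
  have t1 : HasDerivAt (fun t => -Real.sinh (c - t) * Real.cos t ^ (n+2))
      (Real.cosh (c - x) * Real.cos x ^ (n+2)
        + (-Real.sinh (c - x)) * (-((n:ℝ)+2) * Real.sin x * Real.cos x ^ (n+1))) x := by
    simpa [Pi.mul_def, Pi.neg_def] using (hsinh.neg.mul hcp2)
  have t2 : HasDerivAt (fun t => Real.cosh (c - t) * Real.cos t ^ (n+1) * Real.sin t)
      ((-Real.sinh (c - x) * Real.cos x ^ (n+1)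
          + Real.cosh (c - x) * (-((n:ℝ)+1) * Real.sin x * Real.cos x ^ n)) * Real.sin x
        + Real.cosh (c - x) * Real.cos x ^ (n+1) * Real.cos x) x :=
    (hcosh.mul hcp1).mul (Real.hasDerivAt_sin x)
  have := t1.add (t2.const_mul ((n:ℝ)+2))
  refine this.congr_deriv (Eq.symm ?_)
  linear_combination (((n:ℝ)+2)*((n:ℝ)+1) * Real.cosh (c-x) * Real.cos x ^ n) * (Real.sin_sq_add_cos_sq x)

lemma Go_rec (n : ℕ) :
    (((n:ℝ)+2)^2+1) * Go (n+2) = Real.cosh (π/2) + (((n:ℝ)+2)*((n:ℝ)+1)) * Go n := by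
  have hint : ∀ m : ℕ, IntervalIntegrable (fun t => Real.sinh (π/2 - t) * Real.cos t ^ m)
      MeasureTheory.volume 0 (π/2) := fun m => by
    apply Continuous.intervalIntegrable; fun_prop
  have key := intervalIntegral.integral_eq_sub_of_hasDerivAt
    (f := fun t => -Real.cosh (π/2 - t) * Real.cos t ^ (n+2)
      + ((n:ℝ)+2) * (Real.sinh (π/2 - t) * Real.cos t ^ (n+1) * Real.sin t))
    (f' := fun x => (((n:ℝ)+2)^2+1) * (Real.sinh (π/2 - x) * Real.cos x ^ (n+2))
        - (((n:ℝ)+2)*((n:ℝ)+1)) * (Real.sinh (π/2 - x) * Real.cos x ^ n))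
    (a := 0) (b := π/2)
    (fun x _ => hasDerivAt_ker (π/2) n x)
    (by apply Continuous.intervalIntegrable; fun_prop)
  rw [intervalIntegral.integral_sub ((hint (n+2)).const_mul _) ((hint n).const_mul _)] at key
  rw [intervalIntegral.integral_const_mul, intervalIntegral.integral_const_mul] at key
  beta_reduce at key
  have e1 : (π/2 - π/2) = 0 := by ring
  rw [e1] at key
  simp only [Real.cos_pi_div_two, Real.sin_pi_div_two, Real.sinh_zero, Real.cosh_zero, sub_zero,
    Real.cos_zero, Real.sin_zero, one_pow, mul_one, mul_zero, zero_mul, one_mul] at key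
  rw [zero_pow (by omega : n + 2 ≠ 0)] at key
  unfold Go
  linarith [key]

lemma Ge_rec (n : ℕ) :
    (((n:ℝ)+2)^2+1) * Ge (n+2) = Real.sinh (π/2) + (((n:ℝ)+2)*((n:ℝ)+1)) * Ge n := by
  have hint : ∀ m : ℕ, IntervalIntegrable (fun t => Real.cosh (π/2 - t) * Real.cos t ^ m)
      MeasureTheory.volume 0 (π/2) := fun m => by
    apply Continuous.intervalIntegrable; fun_prop
  have key := intervalIntegral.integral_eq_sub_of_hasDerivAt
    (f := fun t => -Real.sinh (π/2 - t) * Real.cos t ^ (n+2)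
      + ((n:ℝ)+2) * (Real.cosh (π/2 - t) * Real.cos t ^ (n+1) * Real.sin t))
    (f' := fun x => (((n:ℝ)+2)^2+1) * (Real.cosh (π/2 - x) * Real.cos x ^ (n+2))
        - (((n:ℝ)+2)*((n:ℝ)+1)) * (Real.cosh (π/2 - x) * Real.cos x ^ n))
    (a := 0) (b := π/2)
    (fun x _ => hasDerivAt_ker' (π/2) n x)
    (by apply Continuous.intervalIntegrable; fun_prop)
  rw [intervalIntegral.integral_sub ((hint (n+2)).const_mul _) ((hint n).const_mul _)] at key
  rw [intervalIntegral.integral_const_mul, intervalIntegral.integral_const_mul] at key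
  beta_reduce at key
  have e1 : (π/2 - π/2) = 0 := by ring
  rw [e1] at key
  simp only [Real.cos_pi_div_two, Real.sin_pi_div_two, Real.sinh_zero, Real.cosh_zero, sub_zero,
    Real.cos_zero, Real.sin_zero, one_pow, mul_one, mul_zero, zero_mul, one_mul] at key
  rw [zero_pow (by omega : n + 2 ≠ 0), zero_pow (by omega : n + 1 ≠ 0)] at key
  unfold Ge
  linarith [key]

lemma Go_one : Go 1 = Real.cosh (π/2) / 2 := by
  have key := intervalIntegral.integral_eq_sub_of_hasDerivAt
    (f := fun t => (Real.sin t * Real.sinh (π/2 - t) - Real.cos t * Real.cosh (π/2 - t))/2)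
    (f' := fun t => Real.sinh (π/2 - t) * Real.cos t ^ 1)
    (a := 0) (b := π/2) ?_ (by apply Continuous.intervalIntegrable; fun_prop)
  · unfold Go
    rw [key]
    beta_reduce
    rw [show (π/2 - π/2 : ℝ) = 0 by ring]
    simp [Real.sinh_zero, Real.cosh_zero]
    ring
  · intro x _
    have hct : HasDerivAt (fun t : ℝ => π/2 - t) (-1) x := by
      simpa using (hasDerivAt_id x).const_sub (π/2)
    have hcosh : HasDerivAt (fun t => Real.cosh (π/2 - t)) (-Real.sinh (π/2 - x)) x := by
      simpa [Function.comp_def] using (Real.hasDerivAt_cosh (π/2 - x)).comp x hct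
    have hsinh : HasDerivAt (fun t => Real.sinh (π/2 - t)) (-Real.cosh (π/2 - x)) x := by
      simpa [Function.comp_def] using (Real.hasDerivAt_sinh (π/2 - x)).comp x hct
    have t1 := (Real.hasDerivAt_sin x).mul hsinh
    have t2 := (Real.hasDerivAt_cos x).mul hcosh
    have := (t1.sub t2).div_const 2
    refine this.congr_deriv ?_
    ring

lemma Ge_zero : Ge 0 = Real.sinh (π/2) := by
  have key := intervalIntegral.integral_eq_sub_of_hasDerivAt
    (f := fun t => -Real.sinh (π/2 - t))
    (f' := fun t => Real.cosh (π/2 - t) * Real.cos t ^ 0)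
    (a := 0) (b := π/2) ?_ (by apply Continuous.intervalIntegrable; fun_prop)
  · unfold Ge
    rw [key]
    beta_reduce
    rw [show (π/2 - π/2 : ℝ) = 0 by ring]
    simp
  · intro x _
    have hct : HasDerivAt (fun t : ℝ => π/2 - t) (-1) x := by
      simpa using (hasDerivAt_id x).const_sub (π/2)
    have hsinh : HasDerivAt (fun t => Real.sinh (π/2 - t)) (-Real.cosh (π/2 - x)) x := by
      simpa [Function.comp_def] using (Real.hasDerivAt_sinh (π/2 - x)).comp x hct
    have := hsinh.neg
    refine this.congr_deriv ?_
    simp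

lemma W_rec (n : ℕ) : Wn (n+2) = ((n:ℝ)+1)/((n:ℝ)+2) * Wn n := by
  unfold Wn
  rw [integral_cos_pow n]
  simp [Real.cos_pi_div_two, Real.sin_pi_div_two, zero_pow (by omega : n + 1 ≠ 0)]

lemma W_zero : Wn 0 = π/2 := by
  simp [Wn]

lemma W_one : Wn 1 = 1 := by
  unfold Wn
  simp only [pow_one]
  rw [integral_cos]
  simp

lemma W_pos (n : ℕ) : 0 < Wn n := by
  unfold Wn
  apply intervalIntegral.intervalIntegral_pos_of_pos_on
  · apply Continuous.intervalIntegrable; fun_prop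
  · intro x hx
    have hc : 0 < Real.cos x := Real.cos_pos_of_mem_Ioo ⟨by linarith [hx.1, pi_pos], hx.2⟩
    positivity
  · linarith [pi_pos]

lemma W_mono (n : ℕ) : Wn (n+1) ≤ Wn n := by
  unfold Wn
  apply intervalIntegral.integral_mono_on (by positivity)
    (by apply Continuous.intervalIntegrable; fun_prop)
    (by apply Continuous.intervalIntegrable; fun_prop)
  intro x hx
  have hc0 : 0 ≤ Real.cos x := Real.cos_nonneg_of_mem_Icc ⟨by linarith [hx.1, pi_pos], hx.2⟩
  exact pow_le_pow_of_le_one hc0 (Real.cos_le_one x) (Nat.le_succ n)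

lemma W_prod : ∀ n : ℕ, ((n:ℝ)+1) * Wn (n+1) * Wn n = π/2 := by
  intro n
  induction n with
  | zero => simp [W_zero, W_one]
  | succ m ih =>
      rw [show m+1+1 = m+2 from rfl, W_rec m]
      push_cast
      calc ((m:ℝ)+1+1) * (((m:ℝ)+1)/((m:ℝ)+2) * Wn m) * Wn (m+1)
          = ((m:ℝ)+1) * Wn (m+1) * Wn m := by
            have h2 : ((m:ℝ)+2) ≠ 0 := by positivity
            field_simp
            ring
        _ = π/2 := ih

lemma sqrtW (n : ℕ) (hn : 1 ≤ n) : Real.sqrt n * Wn n ≤ Real.sqrt (π/2) := by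
  obtain ⟨m, rfl⟩ : ∃ m, n = m + 1 := ⟨n - 1, by omega⟩
  have h1 : ((m:ℝ)+1) * Wn (m+1) * Wn (m+1) ≤ π/2 := by
    have hpos : 0 ≤ ((m:ℝ)+1) * Wn (m+1) := by
      have := (W_pos (m+1)).le
      positivity
    calc ((m:ℝ)+1) * Wn (m+1) * Wn (m+1) ≤ ((m:ℝ)+1) * Wn (m+1) * Wn m := by
          exact mul_le_mul_of_nonneg_left (W_mono m) hpos
      _ = π/2 := W_prod m
  have h2 : Real.sqrt ((m+1 : ℕ) : ℝ) * Wn (m+1) = Real.sqrt (((m:ℝ)+1) * Wn (m+1) * Wn (m+1)) := by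
    rw [mul_assoc, Real.sqrt_mul (by positivity), Real.sqrt_mul_self (W_pos (m+1)).le]
    push_cast
    ring_nf
  rw [h2]
  exact Real.sqrt_le_sqrt h1

lemma Go_le (n : ℕ) : Go n ≤ Real.sinh (π/2) * Wn n := by
  unfold Go Wn
  rw [← intervalIntegral.integral_const_mul]
  apply intervalIntegral.integral_mono_on (by positivity)
    (by apply Continuous.intervalIntegrable; fun_prop)
    (by apply Continuous.intervalIntegrable; fun_prop)
  intro x hx
  have hc0 : 0 ≤ Real.cos x := Real.cos_nonneg_of_mem_Icc ⟨by linarith [hx.1, pi_pos], hx.2⟩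
  have hs : Real.sinh (π/2 - x) ≤ Real.sinh (π/2) := Real.sinh_le_sinh.mpr (by linarith [hx.1])
  have := pow_nonneg hc0 n
  nlinarith

lemma Ge_le (n : ℕ) : Ge n ≤ Real.cosh (π/2) * Wn n := by
  unfold Ge Wn
  rw [← intervalIntegral.integral_const_mul]
  apply intervalIntegral.integral_mono_on (by positivity)
    (by apply Continuous.intervalIntegrable; fun_prop)
    (by apply Continuous.intervalIntegrable; fun_prop)
  intro x hx
  have hc0 : 0 ≤ Real.cos x := Real.cos_nonneg_of_mem_Icc ⟨by linarith [hx.1, pi_pos], hx.2⟩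
  have hs : Real.cosh (π/2 - x) ≤ Real.cosh (π/2) := by
    rw [Real.cosh_le_cosh]
    rw [abs_of_nonneg (by linarith [hx.2] : (0:ℝ) ≤ π/2 - x), abs_of_nonneg (by positivity : (0:ℝ) ≤ π/2)]
    linarith [hx.1]
  have := pow_nonneg hc0 n
  nlinarith

lemma ho_eq : ∀ k : ℕ, h (2*k+1) * Real.cosh (π/2) = Go (2*k+1) := by
  intro k
  induction k with
  | zero =>
      rw [show 2*0+1 = 1 from rfl, h_one, Go_one]
      ring
  | succ m ih =>
      have e : 2*(m+1)+1 = (2*m+1)+2 := by omega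
      rw [e]
      have hr := h_rec (2*m+1)
      have gr := Go_rec (2*m+1)
      have hD : (0:ℝ) < (((2*m+1 : ℕ):ℝ)+2)^2+1 := by positivity
      apply mul_left_cancel₀ hD.ne'
      linear_combination Real.cosh (π/2) * hr - gr
        + (((2*m+1 : ℕ):ℝ)+2)*(((2*m+1 : ℕ):ℝ)+1) * ih

lemma he_eq : ∀ k : ℕ, h (2*k) * Real.sinh (π/2) = Ge (2*k) := by
  intro k
  induction k with
  | zero =>
      rw [show 2*0 = 0 from rfl, h_zero, Ge_zero]
      ring
  | succ m ih =>
      have e : 2*(m+1) = (2*m)+2 := by omega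
      rw [e]
      have hr := h_rec (2*m)
      have gr := Ge_rec (2*m)
      have hD : (0:ℝ) < (((2*m : ℕ):ℝ)+2)^2+1 := by positivity
      apply mul_left_cancel₀ hD.ne'
      linear_combination Real.sinh (π/2) * hr - gr
        + (((2*m : ℕ):ℝ)+2)*(((2*m : ℕ):ℝ)+1) * ih

theorem stmt_9 (n : ℕ) :
    (Odd n → 1 ≤ n →
      1 / 2 ≤ Real.sqrt n * h n ∧ Real.sqrt n * h n ≤ Real.sqrt (π / 2) * Real.tanh (π / 2)) ∧
    (Even n → 2 ≤ n →
      3 * Real.sqrt 2 / 5 ≤ Real.sqrt n * h n ∧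
        Real.sqrt n * h n ≤ Real.sqrt (π / 2) * (Real.cosh (π / 2) / Real.sinh (π / 2))) := by
  have hcosh : (0:ℝ) < Real.cosh (π/2) := Real.cosh_pos (π/2)
  have hsinh : (0:ℝ) < Real.sinh (π/2) := by
    rw [Real.sinh_pos_iff]
    positivity
  constructor
  · intro hodd hn1
    obtain ⟨k, hk⟩ := hodd
    have hsn : (0:ℝ) < Real.sqrt n := Real.sqrt_pos.mpr (by exact_mod_cast hn1)
    constructor
    · -- lower bound
      have hbase : (1/2 : ℝ) / Real.sqrt ((1:ℕ):ℝ) ≤ h 1 := by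
        rw [h_one]
        norm_num
      have hall := lower_all (1/2) (by norm_num) (by norm_num) 1 le_rfl hbase k
      rw [show 1 + 2*k = n from by omega] at hall
      rw [div_le_iff₀ hsn] at hall
      linarith
    · -- upper bound
      have heq := ho_eq k
      rw [show 2*k+1 = n from by omega] at heq
      have hle : h n * Real.cosh (π/2) ≤ Real.sinh (π/2) * Wn n := by
        rw [heq]; exact Go_le n
      have h1 : h n ≤ Real.tanh (π/2) * Wn n := by
        rw [Real.tanh_eq_sinh_div_cosh, div_mul_eq_mul_div, le_div_iff₀ hcosh]
        linarith
      have h2 : Real.sqrt n * h n ≤ Real.tanh (π/2) * (Real.sqrt n * Wn n) := by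
        have := mul_le_mul_of_nonneg_left h1 (Real.sqrt_nonneg (n:ℝ))
        linarith [this]
      have htanh : (0:ℝ) ≤ Real.tanh (π/2) := by
        rw [Real.tanh_eq_sinh_div_cosh]
        positivity
      have h3 := mul_le_mul_of_nonneg_left (sqrtW n hn1) htanh
      calc Real.sqrt n * h n ≤ Real.tanh (π/2) * (Real.sqrt n * Wn n) := h2
        _ ≤ Real.tanh (π/2) * Real.sqrt (π/2) := h3
        _ = Real.sqrt (π/2) * Real.tanh (π/2) := by ring
  · intro heven hn2
    obtain ⟨k, hk⟩ := heven
    have hk2 : n = 2*k := by omega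
    have hk1 : 1 ≤ k := by omega
    have hsn : (0:ℝ) < Real.sqrt n := Real.sqrt_pos.mpr (by
      have : (2:ℝ) ≤ (n:ℝ) := by exact_mod_cast hn2
      linarith)
    have hs2 : (0:ℝ) < Real.sqrt 2 := Real.sqrt_pos.mpr (by norm_num)
    have hs2sq : Real.sqrt 2 ^ 2 = 2 := Real.sq_sqrt (by norm_num)
    constructor
    · -- lower bound
      have hL1 : (3 * Real.sqrt 2 / 5 : ℝ) ≤ 1 := by nlinarith
      have hL0 : (0:ℝ) ≤ 3 * Real.sqrt 2 / 5 := by positivity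
      have hbase : (3 * Real.sqrt 2 / 5 : ℝ) / Real.sqrt ((2:ℕ):ℝ) ≤ h 2 := by
        rw [h_two]
        have e : ((2:ℕ):ℝ) = 2 := by norm_num
        rw [e, div_le_iff₀ hs2]
        nlinarith
      have hall := lower_all (3 * Real.sqrt 2 / 5) hL0 hL1 2 (by norm_num) hbase (k-1)
      rw [show 2 + 2*(k-1) = n from by omega] at hall
      rw [div_le_iff₀ hsn] at hall
      linarith
    · -- upper bound
      have heq := he_eq k
      rw [show 2*k = n from by omega] at heq
      have hle : h n * Real.sinh (π/2) ≤ Real.cosh (π/2) * Wn n := by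
        rw [heq]; exact Ge_le n
      have h1 : h n ≤ (Real.cosh (π/2) / Real.sinh (π/2)) * Wn n := by
        rw [div_mul_eq_mul_div, le_div_iff₀ hsinh]
        linarith
      have h2 : Real.sqrt n * h n ≤ (Real.cosh (π/2) / Real.sinh (π/2)) * (Real.sqrt n * Wn n) := by
        have := mul_le_mul_of_nonneg_left h1 (Real.sqrt_nonneg (n:ℝ))
        linarith [this]
      have hcoth : (0:ℝ) ≤ Real.cosh (π/2) / Real.sinh (π/2) := by positivity
      have h3 := mul_le_mul_of_nonneg_left (sqrtW n (by omega)) hcoth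
      calc Real.sqrt n * h n ≤ (Real.cosh (π/2) / Real.sinh (π/2)) * (Real.sqrt n * Wn n) := h2
        _ ≤ (Real.cosh (π/2) / Real.sinh (π/2)) * Real.sqrt (π/2) := h3
        _ = Real.sqrt (π/2) * (Real.cosh (π/2) / Real.sinh (π/2)) := by ring
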